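/- Let g, b, F be real numbers with g > 0, b > 0 and b² ≥ F² + 2gF. Then for each σ ∈ {−1, +1}, the number α_σ = (g·b)/(g² + b²) · ( b − (g/b)·F − σ·√(b² − F² − 2gF) ) satisfies the equation ((F + α_σ)/b)² + (α_σ/g − 1)² = 1. -/

import Mathlib

/-- Both branches of the explicit solution formula solve the flow-loss equation. -/
theorem flow_loss_branches_solve (g b F : ℝ) (hg : 0 < g) (hb : 0 < b)
    (h : b ^ 2 ≥ F ^ 2 + 2 * g * F) :
    ∀ σ : ℝ, σ = -1 ∨ σ = 1 →
      ((F + (g * b / (g ^ 2 + b ^ 2)) *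
          (b - (g / b) * F - σ * Real.sqrt (b ^ 2 - F ^ 2 - 2 * g * F))) / b) ^ 2 +
        (((g * b / (g ^ 2 + b ^ 2)) *
          (b - (g / b) * F - σ * Real.sqrt (b ^ 2 - F ^ 2 - 2 * g * F))) / g - 1) ^ 2 = 1 := by
  intro σ hσ
  have hσ2 : σ ^ 2 = 1 := by rcases hσ with h | h <;> rw [h] <;> ring
  have hD : (0:ℝ) ≤ b ^ 2 - F ^ 2 - 2 * g * F := by linarith
  have hs : Real.sqrt (b ^ 2 - F ^ 2 - 2 * g * F) ^ 2 = b ^ 2 - F ^ 2 - 2 * g * F :=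
    Real.sq_sqrt hD
  have hgb : g ^ 2 + b ^ 2 ≠ 0 := by positivity
  generalize Real.sqrt (b ^ 2 - F ^ 2 - 2 * g * F) = S at hs ⊢
  field_simp
  linear_combination ((g^2+b^2)*b^2*σ^2) * hs +
    ((g^2+b^2)*b^2*(b^2-F^2-2*g*F)) * hσ2
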